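/- Let m ≥ 1 and let c_{ij} ∈ ℂ for 1 ≤ i < j ≤ m (set c_{ji} := c_{ij}). Then ∑_{π = {S_1,…,S_d}} (−1)^{d−1} (d−1)! ∏_{ℓ=1}^d ∏_{i<j, i,j ∈ S_ℓ} c_{ij} = ∑_{Ω} ∏_{ {i,j} ∈ E(Ω), i<j } ( c_{ij} − 1 ), where the left sum runs over all set partitions π of {1,…,m} into nonempty blocks, and the right sum runs over all connected simple graphs Ω on the vertex set {1,…,m}, with E(Ω) the edge set of Ω (empty products equal 1). -/

import Mathlib

open scoped Classical

/-- `P` is a set partition of `{1,…,m}` (as `Finset.univ : Finset (Fin m)`). -/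
def IsSetPartition {m : ℕ} (P : Finset (Finset (Fin m))) : Prop :=
  (∀ T ∈ P, T.Nonempty) ∧ (∀ T ∈ P, ∀ T' ∈ P, T ≠ T' → Disjoint T T') ∧
    (∀ i : Fin m, ∃ T ∈ P, i ∈ T)

section Auxiliary

variable {α : Type*} [DecidableEq α]

/-- All set partitions of a finset `S`. -/
noncomputable def parts (S : Finset α) : Finset (Finset (Finset α)) :=
  S.powerset.powerset.filter (fun P =>
    (∀ T ∈ P, T.Nonempty) ∧ (∀ T ∈ P, ∀ T' ∈ P, T ≠ T' → Disjoint T T') ∧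
      (∀ i ∈ S, ∃ T ∈ P, i ∈ T))

lemma mem_parts {S : Finset α} {P : Finset (Finset α)} :
    P ∈ parts S ↔ (∀ T ∈ P, T ⊆ S) ∧ (∀ T ∈ P, T.Nonempty) ∧
      (∀ T ∈ P, ∀ T' ∈ P, T ≠ T' → Disjoint T T') ∧ (∀ i ∈ S, ∃ T ∈ P, i ∈ T) := by
  simp only [parts, Finset.mem_filter, Finset.mem_powerset]
  constructor
  · rintro ⟨h1, h2, h3, h4⟩
    exact ⟨fun T hT => Finset.mem_powerset.1 (h1 hT), h2, h3, h4⟩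
  · rintro ⟨h1, h2, h3, h4⟩
    exact ⟨fun T hT => Finset.mem_powerset.2 (h1 T hT), h2, h3, h4⟩

lemma parts_block_unique {S : Finset α} {P : Finset (Finset α)} (hP : P ∈ parts S)
    {T T' : Finset α} {a : α} (hT : T ∈ P) (hT' : T' ∈ P) (ha : a ∈ T) (ha' : a ∈ T') :
    T = T' := by
  by_contra h
  exact Finset.disjoint_left.1 (mem_parts.1 hP |>.2.2.1 T hT T' hT' h) ha ha'

/-- The block of `P` containing `a`. -/
noncomputable def ablock (a : α) (P : Finset (Finset α)) : Finset α :=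
  (P.filter (fun T => a ∈ T)).biUnion id

lemma ablock_eq {S : Finset α} {P : Finset (Finset α)} (hP : P ∈ parts S)
    {a : α} {T : Finset α} (hT : T ∈ P) (ha : a ∈ T) : ablock a P = T := by
  have : P.filter (fun T => a ∈ T) = {T} := by
    apply Finset.ext; intro U
    simp only [Finset.mem_filter, Finset.mem_singleton]
    constructor
    · rintro ⟨hU, haU⟩; exact parts_block_unique hP hU hT haU ha
    · rintro rfl; exact ⟨hT, ha⟩
  simp [ablock, this]

lemma ablock_mem {S : Finset α} {P : Finset (Finset α)} (hP : P ∈ parts S)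
    {a : α} (ha : a ∈ S) : ablock a P ∈ P ∧ a ∈ ablock a P := by
  obtain ⟨T, hT, haT⟩ := (mem_parts.1 hP).2.2.2 a ha
  rw [ablock_eq hP hT haT]; exact ⟨hT, haT⟩

lemma parts_empty : parts (∅ : Finset α) = {∅} := by
  apply Finset.ext; intro P
  simp only [Finset.mem_singleton, mem_parts]
  constructor
  · rintro ⟨h1, h2, h3, h4⟩
    by_contra hne
    obtain ⟨T, hT⟩ := Finset.nonempty_iff_ne_empty.2 hne
    obtain ⟨x, hx⟩ := h2 T hT
    exact absurd (h1 T hT hx) (Finset.notMem_empty x)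
  · rintro rfl
    refine ⟨by simp, by simp, by simp, by simp⟩

/-- Decomposition of partitions of `S` by the block containing `a`. -/
lemma parts_decomp {S : Finset α} {a : α} (ha : a ∈ S) (f : Finset (Finset α) → ℂ) :
    ∑ P ∈ parts S, f P =
      ∑ B ∈ (S.erase a).powerset, ∑ Q ∈ parts ((S.erase a) \ B),
        f (insert (insert a B) Q) := by
  have key : ∀ B Q, B ⊆ S.erase a → Q ∈ parts ((S.erase a) \ B) →
      insert a B ∉ Q ∧ insert (insert a B) Q ∈ parts S := by
    intro B Q hB hQ
    obtain ⟨hQsub, hQne, hQdisj, hQcov⟩ := mem_parts.1 hQ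
    have haB : a ∉ B := fun h => (Finset.mem_erase.1 (hB h)).1 rfl
    have hblk : ∀ T ∈ Q, Disjoint (insert a B) T := by
      intro T hT
      rw [Finset.disjoint_left]
      intro x hx hxT
      have hxd := Finset.mem_sdiff.1 (hQsub T hT hxT)
      rcases Finset.mem_insert.1 hx with rfl | hxB
      · exact (Finset.mem_erase.1 hxd.1).1 rfl
      · exact hxd.2 hxB
    have haQ : insert a B ∉ Q := by
      intro h
      exact (Finset.disjoint_left.1 (hblk _ h)) (Finset.mem_insert_self a B)
        (Finset.mem_insert_self a B)
    refine ⟨haQ, ?_⟩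
    rw [mem_parts]
    refine ⟨?_, ?_, ?_, ?_⟩
    · intro T hT
      rcases Finset.mem_insert.1 hT with rfl | hTQ
      · intro x hx
        rcases Finset.mem_insert.1 hx with rfl | hxB
        · exact ha
        · exact Finset.mem_of_mem_erase (hB hxB)
      · exact fun x hx => Finset.mem_of_mem_erase
          (Finset.mem_sdiff.1 (hQsub T hTQ hx)).1
    · intro T hT
      rcases Finset.mem_insert.1 hT with rfl | hTQ
      · exact ⟨a, Finset.mem_insert_self a B⟩
      · exact hQne T hTQ
    · intro T hT T' hT' hne'
      rcases Finset.mem_insert.1 hT with rfl | hTQ <;>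
        rcases Finset.mem_insert.1 hT' with h' | hT'Q
      · exact absurd h'.symm hne'
      · exact hblk T' hT'Q
      · subst h'; exact (hblk T hTQ).symm
      · exact hQdisj T hTQ T' hT'Q hne'
    · intro i hi
      by_cases hia : i = a
      · exact ⟨insert a B, Finset.mem_insert_self _ _, hia ▸ Finset.mem_insert_self a B⟩
      · by_cases hiB : i ∈ B
        · exact ⟨insert a B, Finset.mem_insert_self _ _, Finset.mem_insert_of_mem hiB⟩
        · obtain ⟨T, hT, hiT⟩ := hQcov i (Finset.mem_sdiff.2
            ⟨Finset.mem_erase.2 ⟨hia, hi⟩, hiB⟩)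
          exact ⟨T, Finset.mem_insert_of_mem hT, hiT⟩
  rw [Finset.sum_sigma']
  refine Finset.sum_nbij'
    (fun P => ⟨(ablock a P).erase a, P.erase (ablock a P)⟩)
    (fun bq => insert (insert a bq.1) bq.2) ?_ ?_ ?_ ?_ ?_
  · -- forward membership
    intro P hP
    obtain ⟨hbm, hab⟩ := ablock_mem hP ha
    have hsub : ablock a P ⊆ S := (mem_parts.1 hP).1 _ hbm
    rw [Finset.mem_sigma]
    constructor
    · rw [Finset.mem_powerset]
      exact fun x hx => Finset.mem_erase.2 ⟨(Finset.mem_erase.1 hx).1,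
        hsub (Finset.mem_erase.1 hx).2⟩
    · rw [mem_parts]
      obtain ⟨hPsub, hne, hdisj, hcov⟩ := mem_parts.1 hP
      refine ⟨?_, ?_, ?_, ?_⟩
      · intro T hT
        have hTP := Finset.mem_of_mem_erase hT
        have hTne := (Finset.mem_erase.1 hT).1
        intro x hx
        refine Finset.mem_sdiff.2 ⟨Finset.mem_erase.2 ⟨?_, hPsub T hTP hx⟩, ?_⟩
        · rintro rfl
          exact hTne (parts_block_unique hP hTP hbm hx hab)
        · intro hxB
          have hxab : x ∈ ablock a P := Finset.mem_of_mem_erase hxB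
          exact hTne (parts_block_unique hP hTP hbm hx hxab)
      · exact fun T hT => hne T (Finset.mem_of_mem_erase hT)
      · exact fun T hT T' hT' h => hdisj T (Finset.mem_of_mem_erase hT) T'
          (Finset.mem_of_mem_erase hT') h
      · intro i hi
        obtain ⟨hi1, hi2⟩ := Finset.mem_sdiff.1 hi
        obtain ⟨T, hT, hiT⟩ := hcov i (Finset.mem_of_mem_erase hi1)
        refine ⟨T, Finset.mem_erase.2 ⟨?_, hT⟩, hiT⟩
        rintro rfl
        exact hi2 (Finset.mem_erase.2 ⟨(Finset.mem_erase.1 hi1).1, hiT⟩)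
  · -- backward membership
    rintro ⟨B, Q⟩ hbq
    rw [Finset.mem_sigma, Finset.mem_powerset] at hbq
    exact (key B Q hbq.1 hbq.2).2
  · -- left_inv
    intro P hP
    obtain ⟨hbm, hab⟩ := ablock_mem hP ha
    show insert (insert a ((ablock a P).erase a)) (P.erase (ablock a P)) = P
    rw [Finset.insert_erase hab, Finset.insert_erase hbm]
  · -- right_inv
    rintro ⟨B, Q⟩ hbq
    rw [Finset.mem_sigma, Finset.mem_powerset] at hbq
    obtain ⟨hB, hQ⟩ := hbq
    obtain ⟨haQ, hP'⟩ := key B Q hB hQ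
    have haB : a ∉ B := fun h => (Finset.mem_erase.1 (hB h)).1 rfl
    have hab' : ablock a (insert (insert a B) Q) = insert a B :=
      ablock_eq hP' (Finset.mem_insert_self _ _) (Finset.mem_insert_self a B)
    show (⟨(ablock a (insert (insert a B) Q)).erase a,
      (insert (insert a B) Q).erase (ablock a (insert (insert a B) Q))⟩ :
        Σ _ : Finset α, Finset (Finset α)) = ⟨B, Q⟩
    rw [hab', Finset.erase_insert haB, Finset.erase_insert haQ]
  · -- value equality
    intro P hP
    obtain ⟨hbm, hab⟩ := ablock_mem hP ha
    have hPP : insert (insert a ((ablock a P).erase a)) (P.erase (ablock a P)) = P := by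
      rw [Finset.insert_erase hab, Finset.insert_erase hbm]
    exact (congrArg f hPP).symm

lemma insert_card_aux {S : Finset α} {a : α} (ha : a ∈ S) {B : Finset α} {Q : Finset (Finset α)}
    (hB : B ∈ (S.erase a).powerset) (hQ : Q ∈ parts ((S.erase a) \ B)) :
    (insert (insert a B) Q).card = Q.card + 1 := by
  rw [Finset.mem_powerset] at hB
  refine Finset.card_insert_of_notMem ?_
  intro h
  have := (mem_parts.1 hQ).1 _ h (Finset.mem_insert_self a B)
  exact (Finset.mem_erase.1 (Finset.mem_sdiff.1 this).1).1 rfl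

lemma prod_range_sub_succ (x : ℂ) (d : ℕ) :
    ∏ i ∈ Finset.range (d + 1), (x - i) = x * ∏ i ∈ Finset.range d, (x - 1 - i) := by
  rw [Finset.prod_range_succ']
  push_cast
  rw [sub_zero, mul_comm]
  congr 1
  exact Finset.prod_congr rfl (fun i _ => by push_cast; ring)

lemma sum_powerset_pow (x : ℂ) (A : Finset α) :
    ∑ B ∈ A.powerset, (x - 1) ^ (A \ B).card = x ^ A.card := by
  have := Finset.prod_add (fun _ : α => (1 : ℂ)) (fun _ : α => x - 1) A
  simp only [Finset.prod_const, one_pow, one_mul] at this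
  rw [show (1 + (x - 1)) ^ A.card = x ^ A.card by ring_nf] at this
  exact this.symm

lemma sum_parts_pow : ∀ (n : ℕ) (x : ℂ) (S : Finset α), S.card = n →
    ∑ P ∈ parts S, ∏ i ∈ Finset.range P.card, (x - i) = x ^ S.card := by
  intro n
  induction n using Nat.strong_induction_on with
  | _ n IH =>
    intro x S hS
    rcases S.eq_empty_or_nonempty with rfl | ⟨a, ha⟩
    · simp [parts_empty]
    · rw [parts_decomp ha]
      have hA : (S.erase a).card = S.card - 1 := Finset.card_erase_of_mem ha
      have hn : 1 ≤ S.card := Finset.card_pos.2 ⟨a, ha⟩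
      have hstep : ∀ B ∈ (S.erase a).powerset,
          ∑ Q ∈ parts ((S.erase a) \ B),
            ∏ i ∈ Finset.range ((insert (insert a B) Q).card), (x - i)
          = x * (x - 1) ^ ((S.erase a) \ B).card := by
        intro B hB
        have h1 : ∀ Q ∈ parts ((S.erase a) \ B),
            ∏ i ∈ Finset.range ((insert (insert a B) Q).card), (x - i)
            = x * ∏ i ∈ Finset.range Q.card, (x - 1 - i) := by
          intro Q hQ
          rw [insert_card_aux ha hB hQ, prod_range_sub_succ]
        rw [Finset.sum_congr rfl h1, ← Finset.mul_sum]
        congr 1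
        refine IH ((S.erase a) \ B).card ?_ (x - 1) _ rfl
        calc ((S.erase a) \ B).card ≤ (S.erase a).card :=
              Finset.card_le_card (Finset.sdiff_subset)
          _ < S.card := by omega
          _ = n := hS
      rw [Finset.sum_congr rfl hstep, ← Finset.mul_sum, sum_powerset_pow x (S.erase a), hA]
      rw [← pow_succ']
      congr 1
      omega

lemma sum_parts_pow_pred {S : Finset α} (hS : S.Nonempty) (x : ℂ) :
    ∑ P ∈ parts S, ∏ i ∈ Finset.range (P.card - 1), (x - (i + 1)) = x ^ (S.card - 1) := by
  obtain ⟨a, ha⟩ := hS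
  rw [parts_decomp ha]
  have hstep : ∀ B ∈ (S.erase a).powerset,
      ∑ Q ∈ parts ((S.erase a) \ B),
        ∏ i ∈ Finset.range ((insert (insert a B) Q).card - 1), (x - (i + 1))
      = (x - 1) ^ ((S.erase a) \ B).card := by
    intro B hB
    have h1 : ∀ Q ∈ parts ((S.erase a) \ B),
        ∏ i ∈ Finset.range ((insert (insert a B) Q).card - 1), (x - (i + 1))
        = ∏ i ∈ Finset.range Q.card, (x - 1 - i) := by
      intro Q hQ
      rw [insert_card_aux ha hB hQ, Nat.add_sub_cancel]
      exact Finset.prod_congr rfl (fun i _ => by push_cast; ring)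
    rw [Finset.sum_congr rfl h1]
    exact sum_parts_pow _ (x - 1) _ rfl
  rw [Finset.sum_congr rfl hstep, sum_powerset_pow x (S.erase a),
    Finset.card_erase_of_mem ha]

lemma sum_parts_sign {S : Finset α} (hS : S.Nonempty) :
    ∑ P ∈ parts S, (-1 : ℂ) ^ (P.card - 1) * (Nat.factorial (P.card - 1) : ℂ)
      = if S.card = 1 then 1 else 0 := by
  have h := sum_parts_pow_pred hS (0 : ℂ)
  have h2 : ∀ P ∈ parts S, ∏ i ∈ Finset.range (P.card - 1), ((0 : ℂ) - (i + 1))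
      = (-1 : ℂ) ^ (P.card - 1) * (Nat.factorial (P.card - 1) : ℂ) := by
    intro P _
    rw [show ∀ d, ∏ i ∈ Finset.range d, ((0 : ℂ) - (i + 1))
        = (-1 : ℂ) ^ d * (Nat.factorial d : ℂ) from ?_]
    intro d
    calc ∏ i ∈ Finset.range d, ((0 : ℂ) - (i + 1))
        = ∏ i ∈ Finset.range d, (-1 : ℂ) * ((i : ℂ) + 1) :=
          Finset.prod_congr rfl (fun i _ => by ring)
      _ = (-1 : ℂ) ^ d * ∏ i ∈ Finset.range d, ((i : ℂ) + 1) := by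
          rw [Finset.prod_mul_distrib, Finset.prod_const, Finset.card_range]
      _ = (-1 : ℂ) ^ d * (Nat.factorial d : ℂ) := by
          congr 1
          rw [← Finset.prod_range_add_one_eq_factorial d]
          push_cast
          rfl
  rw [Finset.sum_congr rfl h2] at h
  rw [h]
  have hc : 1 ≤ S.card := Finset.card_pos.2 hS
  rcases Nat.eq_or_lt_of_le hc with h1 | h1
  · simp [← h1]
  · rw [if_neg (by omega), zero_pow (by omega)]

section Graphs

variable {m : ℕ}

/-- Potential edges. -/
noncomputable def pairsE (m : ℕ) : Finset (Fin m × Fin m) :=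
  Finset.univ.filter (fun p => p.1 < p.2)

/-- Edges inside blocks of `P`. -/
noncomputable def EP (P : Finset (Finset (Fin m))) : Finset (Fin m × Fin m) :=
  Finset.univ.filter (fun p => p.1 < p.2 ∧ ∃ S ∈ P, p.1 ∈ S ∧ p.2 ∈ S)

/-- Graph generated by a set of edge pairs. -/
noncomputable def GF (F : Finset (Fin m × Fin m)) : SimpleGraph (Fin m) :=
  SimpleGraph.fromRel (fun i j => (i, j) ∈ F)

/-- Connected component of `v` as a finset. -/
noncomputable def comp (F : Finset (Fin m × Fin m)) (v : Fin m) : Finset (Fin m) :=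
  Finset.univ.filter (fun w => (GF F).Reachable v w)

/-- The finset of connected components. -/
noncomputable def comps (F : Finset (Fin m × Fin m)) : Finset (Finset (Fin m)) :=
  Finset.univ.image (comp F)

/-- Every pair of `F` lies inside a block of `P`. -/
def Pcond (P : Finset (Finset (Fin m))) (F : Finset (Fin m × Fin m)) : Prop :=
  ∀ p ∈ F, ∃ S ∈ P, p.1 ∈ S ∧ p.2 ∈ S

lemma GF_adj {F : Finset (Fin m × Fin m)} {i j : Fin m} :
    (GF F).Adj i j ↔ i ≠ j ∧ ((i, j) ∈ F ∨ (j, i) ∈ F) := by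
  simp [GF, SimpleGraph.fromRel_adj]

lemma mem_comp_self (F : Finset (Fin m × Fin m)) (v : Fin m) : v ∈ comp F v := by
  simp only [comp, Finset.mem_filter, Finset.mem_univ, true_and]
  exact SimpleGraph.Reachable.refl v

lemma comp_eq_of_mem {F : Finset (Fin m × Fin m)} {v w : Fin m}
    (h : w ∈ comp F v) : comp F w = comp F v := by
  simp only [comp, Finset.mem_filter, Finset.mem_univ, true_and] at h ⊢
  apply Finset.ext; intro x
  simp only [comp, Finset.mem_filter, Finset.mem_univ, true_and]
  exact ⟨fun hx => h.trans hx, fun hx => h.symm.trans hx⟩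

lemma comps_mem_parts (F : Finset (Fin m × Fin m)) :
    comps F ∈ parts (Finset.univ : Finset (Fin m)) := by
  rw [mem_parts]
  refine ⟨fun T _ => T.subset_univ, ?_, ?_, ?_⟩
  · rintro T hT
    obtain ⟨v, _, rfl⟩ := Finset.mem_image.1 hT
    exact ⟨v, mem_comp_self F v⟩
  · rintro T hT T' hT' hne
    obtain ⟨v, _, rfl⟩ := Finset.mem_image.1 hT
    obtain ⟨w, _, rfl⟩ := Finset.mem_image.1 hT'
    rw [Finset.disjoint_left]
    intro x hx hx'
    exact hne ((comp_eq_of_mem hx).symm.trans (comp_eq_of_mem hx'))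
  · intro v _
    exact ⟨comp F v, Finset.mem_image_of_mem _ (Finset.mem_univ v), mem_comp_self F v⟩

lemma comps_nonempty (hm : 1 ≤ m) (F : Finset (Fin m × Fin m)) : (comps F).Nonempty :=
  ⟨comp F ⟨0, hm⟩, Finset.mem_image_of_mem _ (Finset.mem_univ _)⟩

/-- Walk closure: blocks of compatible partitions are unions of components. -/
lemma reach_mem_block {P : Finset (Finset (Fin m))} {F : Finset (Fin m × Fin m)}
    (hP : P ∈ parts (Finset.univ : Finset (Fin m))) (hc : Pcond P F)
    {v w : Fin m} (hr : (GF F).Reachable v w) {T : Finset (Fin m)}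
    (hT : T ∈ P) (hv : v ∈ T) : w ∈ T := by
  obtain ⟨walk⟩ := hr
  induction walk with
  | nil => exact hv
  | @cons a b w' h q ih =>
    refine ih ?_
    obtain ⟨hne, hmem⟩ := GF_adj.1 h
    rcases hmem with hp | hp
    · obtain ⟨S, hS, h1, h2⟩ := hc _ hp
      have hST : S = T := parts_block_unique hP hS hT h1 hv
      exact hST ▸ h2
    · obtain ⟨S, hS, h1, h2⟩ := hc _ hp
      have hST : S = T := parts_block_unique hP hS hT h2 hv
      exact hST ▸ h1

lemma comp_subset_block {P : Finset (Finset (Fin m))} {F : Finset (Fin m × Fin m)}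
    (hP : P ∈ parts (Finset.univ : Finset (Fin m))) (hc : Pcond P F)
    {v : Fin m} {T : Finset (Fin m)} (hT : T ∈ P) (hv : v ∈ T) : comp F v ⊆ T := by
  intro w hw
  simp only [comp, Finset.mem_filter, Finset.mem_univ, true_and] at hw
  exact reach_mem_block hP hc hw hT hv

/-- A block of a compatible partition is the union of the components inside it. -/
lemma block_eq_biUnion {P : Finset (Finset (Fin m))} {F : Finset (Fin m × Fin m)}
    (hP : P ∈ parts (Finset.univ : Finset (Fin m))) (hc : Pcond P F)
    {T : Finset (Fin m)} (hT : T ∈ P) :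
    ((comps F).filter (· ⊆ T)).biUnion id = T := by
  apply Finset.Subset.antisymm
  · intro x hx
    obtain ⟨C, hC, hxC⟩ := Finset.mem_biUnion.1 hx
    exact (Finset.mem_filter.1 hC).2 hxC
  · intro x hx
    refine Finset.mem_biUnion.2 ⟨comp F x, Finset.mem_filter.2
      ⟨Finset.mem_image_of_mem _ (Finset.mem_univ x), comp_subset_block hP hc hT hx⟩,
      mem_comp_self F x⟩

end Graphs

section Graphs2

variable {m : ℕ}

lemma sum_parts_Pcond (F : Finset (Fin m × Fin m)) :
    ∑ P ∈ (parts (Finset.univ : Finset (Fin m))).filter (fun P => Pcond P F),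
        (-1 : ℂ) ^ (P.card - 1) * (Nat.factorial (P.card - 1) : ℂ)
      = ∑ R ∈ parts (comps F),
        (-1 : ℂ) ^ (R.card - 1) * (Nat.factorial (R.card - 1) : ℂ) := by
  obtain ⟨csub, cne, cdisj, ccov⟩ := mem_parts.1 (comps_mem_parts F)
  refine Finset.sum_nbij'
    (fun P => P.image (fun T => (comps F).filter (· ⊆ T)))
    (fun R => R.image (fun r => r.biUnion id)) ?_ ?_ ?_ ?_ ?_
  · -- forward membership
    intro P hPs
    obtain ⟨hPm, hc⟩ := Finset.mem_filter.1 hPs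
    have hc : Pcond P F := hc
    obtain ⟨hPsub, hPne, hPdisj, hPcov⟩ := mem_parts.1 hPm
    rw [mem_parts]
    refine ⟨?_, ?_, ?_, ?_⟩
    · intro r hr
      obtain ⟨T, _, rfl⟩ := Finset.mem_image.1 hr
      exact Finset.filter_subset _ _
    · intro r hr
      obtain ⟨T, hT, rfl⟩ := Finset.mem_image.1 hr
      obtain ⟨v, hv⟩ := hPne T hT
      exact ⟨comp F v, Finset.mem_filter.2 ⟨Finset.mem_image_of_mem _ (Finset.mem_univ v),
        comp_subset_block hPm hc hT hv⟩⟩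
    · intro r hr r' hr' hne
      obtain ⟨T, hT, rfl⟩ := Finset.mem_image.1 hr
      obtain ⟨T', hT', rfl⟩ := Finset.mem_image.1 hr'
      rw [Finset.disjoint_left]
      intro C hC hC'
      obtain ⟨hC1, hC2⟩ := Finset.mem_filter.1 hC
      obtain ⟨hC1', hC2'⟩ := Finset.mem_filter.1 hC'
      have hTT : T ≠ T' := fun h => hne (by rw [h])
      obtain ⟨x, hx⟩ := cne C hC1
      exact Finset.disjoint_left.1 (hPdisj T hT T' hT' hTT) (hC2 hx) (hC2' hx)
    · intro C hC
      obtain ⟨v, _, rfl⟩ := Finset.mem_image.1 hC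
      obtain ⟨T, hT, hvT⟩ := hPcov v (Finset.mem_univ v)
      exact ⟨(comps F).filter (· ⊆ T), Finset.mem_image_of_mem _ hT,
        Finset.mem_filter.2 ⟨hC, comp_subset_block hPm hc hT hvT⟩⟩
  · -- backward membership
    intro R hR
    obtain ⟨hRsub, hRne, hRdisj, hRcov⟩ := mem_parts.1 hR
    rw [Finset.mem_filter]
    constructor
    · rw [mem_parts]
      refine ⟨fun T _ => T.subset_univ, ?_, ?_, ?_⟩
      · intro U hU
        obtain ⟨r, hr, rfl⟩ := Finset.mem_image.1 hU
        obtain ⟨C, hC⟩ := hRne r hr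
        obtain ⟨x, hx⟩ := cne C (hRsub r hr hC)
        exact ⟨x, Finset.mem_biUnion.2 ⟨C, hC, hx⟩⟩
      · intro U hU U' hU' hne
        obtain ⟨r, hr, rfl⟩ := Finset.mem_image.1 hU
        obtain ⟨r', hr', rfl⟩ := Finset.mem_image.1 hU'
        rw [Finset.disjoint_left]
        intro x hx hx'
        obtain ⟨C, hC, hxC⟩ := Finset.mem_biUnion.1 hx
        obtain ⟨C', hC', hxC'⟩ := Finset.mem_biUnion.1 hx'
        have hCC : C = C' := by
          by_contra hCC
          exact Finset.disjoint_left.1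
            (cdisj C (hRsub r hr hC) C' (hRsub r' hr' hC') hCC) hxC hxC'
        subst hCC
        have hrr : r = r' := by
          by_contra hrr
          exact Finset.disjoint_left.1 (hRdisj r hr r' hr' hrr) hC hC'
        exact hne (by rw [hrr])
      · intro v _
        obtain ⟨r, hr, hcr⟩ := hRcov (comp F v) (Finset.mem_image_of_mem _ (Finset.mem_univ v))
        exact ⟨r.biUnion id, Finset.mem_image_of_mem _ hr,
          Finset.mem_biUnion.2 ⟨comp F v, hcr, mem_comp_self F v⟩⟩
    · -- Pcond
      intro p hp
      have hreach : (GF F).Reachable p.1 p.2 := by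
        by_cases hpe : p.1 = p.2
        · rw [hpe]
        · exact (GF_adj.2 ⟨hpe, Or.inl (by rwa [Prod.mk.eta])⟩).reachable
      obtain ⟨r, hr, hcr⟩ := hRcov (comp F p.1) (Finset.mem_image_of_mem _ (Finset.mem_univ p.1))
      refine ⟨r.biUnion id, Finset.mem_image_of_mem _ hr, ?_, ?_⟩
      · exact Finset.mem_biUnion.2 ⟨comp F p.1, hcr, mem_comp_self F p.1⟩
      · refine Finset.mem_biUnion.2 ⟨comp F p.1, hcr, ?_⟩
        show p.2 ∈ comp F p.1
        simp only [comp, Finset.mem_filter, Finset.mem_univ, true_and]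
        exact hreach
  · -- left inverse
    intro P hPs
    obtain ⟨hPm, hc⟩ := Finset.mem_filter.1 hPs
    show (P.image (fun T => (comps F).filter (· ⊆ T))).image (fun r => r.biUnion id) = P
    rw [Finset.image_image]
    calc P.image (fun T => ((comps F).filter (· ⊆ T)).biUnion id)
        = P.image id := Finset.image_congr (fun T hT => block_eq_biUnion hPm hc hT)
      _ = P := Finset.image_id
  · -- right inverse
    intro R hR
    obtain ⟨hRsub, hRne, hRdisj, hRcov⟩ := mem_parts.1 hR
    show (R.image (fun r => r.biUnion id)).image (fun T => (comps F).filter (· ⊆ T)) = R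
    rw [Finset.image_image]
    have key : ∀ r ∈ R, (comps F).filter (· ⊆ r.biUnion id) = r := by
      intro r hr
      apply Finset.ext; intro C
      rw [Finset.mem_filter]
      constructor
      · rintro ⟨hC, hCsub⟩
        obtain ⟨x, hx⟩ := cne C hC
        obtain ⟨C', hC', hxC'⟩ := Finset.mem_biUnion.1 (hCsub hx)
        have hCC : C = C' := by
          by_contra hCC
          exact Finset.disjoint_left.1 (cdisj C hC C' (hRsub r hr hC') hCC) hx hxC'
        exact hCC ▸ hC'
      · intro hC
        exact ⟨hRsub r hr hC, fun x hx => Finset.mem_biUnion.2 ⟨C, hC, hx⟩⟩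
    calc R.image (fun r => (comps F).filter (· ⊆ r.biUnion id))
        = R.image id := Finset.image_congr (fun r hr => key r hr)
      _ = R := Finset.image_id
  · -- value equality
    intro P hPs
    obtain ⟨hPm, hc⟩ := Finset.mem_filter.1 hPs
    have hcard : (P.image (fun T => (comps F).filter (· ⊆ T))).card = P.card := by
      apply Finset.card_image_of_injOn
      intro T hT T' hT' heq
      have heq' : (comps F).filter (· ⊆ T) = (comps F).filter (· ⊆ T') := heq
      have h1 := block_eq_biUnion hPm hc hT
      have h2 := block_eq_biUnion hPm hc hT'
      rw [← h1, ← h2, heq']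
    rw [hcard]

lemma comps_card_one_iff (hm : 1 ≤ m) (F : Finset (Fin m × Fin m)) :
    (comps F).card = 1 ↔ (GF F).Connected := by
  constructor
  · intro h
    obtain ⟨C, hC⟩ := Finset.card_eq_one.1 h
    have hall : ∀ v : Fin m, comp F v = C := by
      intro v
      have : comp F v ∈ comps F := Finset.mem_image_of_mem _ (Finset.mem_univ v)
      rwa [hC, Finset.mem_singleton] at this
    have hnem : Nonempty (Fin m) := ⟨⟨0, hm⟩⟩
    refine ⟨fun v w => ?_⟩
    have : w ∈ comp F v := by
      rw [hall v, ← hall w]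
      exact mem_comp_self F w
    simpa only [comp, Finset.mem_filter, Finset.mem_univ, true_and] using this
  · intro h
    have : comps F = {comp F ⟨0, hm⟩} := by
      apply Finset.ext; intro C
      simp only [comps, Finset.mem_image, Finset.mem_univ, true_and, Finset.mem_singleton]
      constructor
      · rintro ⟨v, rfl⟩
        apply Finset.ext; intro w
        simp only [comp, Finset.mem_filter, Finset.mem_univ, true_and]
        exact ⟨fun hr => (h.preconnected _ v).trans hr, fun hr => (h.preconnected v _).trans hr⟩
      · rintro rfl
        exact ⟨_, rfl⟩
    rw [this, Finset.card_singleton]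

lemma step_B (hm : 1 ≤ m) (F : Finset (Fin m × Fin m)) :
    ∑ P ∈ parts (Finset.univ : Finset (Fin m)),
        (if Pcond P F then (-1 : ℂ) ^ (P.card - 1) * (Nat.factorial (P.card - 1) : ℂ) else 0)
      = if (GF F).Connected then 1 else 0 := by
  rw [← Finset.sum_filter, sum_parts_Pcond F, sum_parts_sign (comps_nonempty hm F)]
  by_cases h : (GF F).Connected
  · rw [if_pos h, if_pos ((comps_card_one_iff hm F).2 h)]
  · rw [if_neg h, if_neg (fun hc => h ((comps_card_one_iff hm F).1 hc))]

end Graphs2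

section FinalAssembly

variable {m : ℕ}

lemma EP_subset (P : Finset (Finset (Fin m))) : EP P ⊆ pairsE m := by
  intro p hp
  simp only [EP, pairsE, Finset.mem_filter, Finset.mem_univ, true_and] at *
  exact hp.1

lemma subset_EP_iff {F : Finset (Fin m × Fin m)} (hF : F ⊆ pairsE m)
    (P : Finset (Finset (Fin m))) : F ⊆ EP P ↔ Pcond P F := by
  constructor
  · intro h p hp
    exact ((Finset.mem_filter.1 (h hp)).2).2
  · intro h p hp
    refine Finset.mem_filter.2 ⟨Finset.mem_univ p, ?_, h p hp⟩
    have := hF hp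
    simpa only [pairsE, Finset.mem_filter, Finset.mem_univ, true_and] using this

lemma GF_pairs (Ω : SimpleGraph (Fin m)) :
    GF (Finset.univ.filter (fun p : Fin m × Fin m => p.1 < p.2 ∧ Ω.Adj p.1 p.2)) = Ω := by
  ext i j
  rw [GF_adj]
  simp only [Finset.mem_filter, Finset.mem_univ, true_and]
  constructor
  · rintro ⟨hne, ⟨_, h⟩ | ⟨_, h⟩⟩
    exacts [h, h.symm]
  · intro h
    refine ⟨h.ne, ?_⟩
    rcases lt_or_gt_of_ne h.ne with hlt | hgt
    · exact Or.inl ⟨hlt, h⟩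
    · exact Or.inr ⟨hgt, h.symm⟩

lemma pairs_GF {F : Finset (Fin m × Fin m)} (hF : F ⊆ pairsE m) :
    Finset.univ.filter (fun p : Fin m × Fin m => p.1 < p.2 ∧ (GF F).Adj p.1 p.2) = F := by
  apply Finset.ext; intro p
  simp only [Finset.mem_filter, Finset.mem_univ, true_and, GF_adj]
  constructor
  · rintro ⟨hlt, hne, hor⟩
    rcases hor with h | h
    · rwa [Prod.mk.eta] at h
    · have h2 := hF h
      simp only [pairsE, Finset.mem_filter, Finset.mem_univ, true_and] at h2
      exact absurd h2 (lt_asymm hlt)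
  · intro hp
    have hlt : p.1 < p.2 := by
      have := hF hp
      simpa only [pairsE, Finset.mem_filter, Finset.mem_univ, true_and] using this
    exact ⟨hlt, ne_of_lt hlt, Or.inl (by rwa [Prod.mk.eta])⟩

lemma prod_blocks (c : Fin m → Fin m → ℂ) {P : Finset (Finset (Fin m))}
    (hP : P ∈ parts (Finset.univ : Finset (Fin m))) :
    ∏ S ∈ P, ∏ p ∈ Finset.univ.filter
        (fun p : Fin m × Fin m => p.1 < p.2 ∧ p.1 ∈ S ∧ p.2 ∈ S), c p.1 p.2
      = ∏ p ∈ EP P, c p.1 p.2 := by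
  have hdisj : (↑P : Set (Finset (Fin m))).PairwiseDisjoint
      (fun S => Finset.univ.filter
        (fun p : Fin m × Fin m => p.1 < p.2 ∧ p.1 ∈ S ∧ p.2 ∈ S)) := by
    intro S hS S' hS' hne
    refine Finset.disjoint_left.2 ?_
    intro p hp hp'
    simp only [Finset.mem_filter, Finset.mem_univ, true_and] at hp hp'
    exact hne (parts_block_unique hP hS hS' hp.2.1 hp'.2.1)
  rw [← Finset.prod_biUnion hdisj]
  congr 1
  apply Finset.ext; intro p
  simp only [Finset.mem_biUnion, EP, Finset.mem_filter, Finset.mem_univ, true_and]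
  constructor
  · rintro ⟨S, hS, hlt, h1, h2⟩
    exact ⟨hlt, S, hS, h1, h2⟩
  · rintro ⟨hlt, S, hS, h1, h2⟩
    exact ⟨S, hS, hlt, h1, h2⟩

lemma prod_expand (c : Fin m → Fin m → ℂ) (A : Finset (Fin m × Fin m)) :
    ∏ p ∈ A, c p.1 p.2 = ∑ F ∈ A.powerset, ∏ p ∈ F, (c p.1 p.2 - 1) := by
  have h0 : ∀ p ∈ A, c p.1 p.2 = (c p.1 p.2 - 1) + 1 := fun p _ => by ring
  rw [Finset.prod_congr rfl h0, Finset.prod_add]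
  exact Finset.sum_congr rfl (fun F _ => by rw [Finset.prod_const_one, mul_one])

lemma powerset_EP (P : Finset (Finset (Fin m))) :
    (EP P).powerset = (pairsE m).powerset.filter (· ⊆ EP P) := by
  apply Finset.ext; intro F
  simp only [Finset.mem_powerset, Finset.mem_filter]
  exact ⟨fun h => ⟨h.trans (EP_subset P), h⟩, fun h => h.2⟩

theorem partition_connected_graph_expansion' (hm : 1 ≤ m)
    (c : Fin m → Fin m → ℂ) :
    ∑ P ∈ parts (Finset.univ : Finset (Fin m)),
        (-1 : ℂ) ^ (P.card - 1) * (Nat.factorial (P.card - 1) : ℂ) *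
          ∏ S ∈ P, ∏ p ∈ Finset.univ.filter
              (fun p : Fin m × Fin m => p.1 < p.2 ∧ p.1 ∈ S ∧ p.2 ∈ S), c p.1 p.2
      = ∑ Ω ∈ Finset.univ.filter (fun Ω : SimpleGraph (Fin m) => Ω.Connected),
          ∏ p ∈ Finset.univ.filter
              (fun p : Fin m × Fin m => p.1 < p.2 ∧ Ω.Adj p.1 p.2), (c p.1 p.2 - 1) := by
  have step1 : ∀ P ∈ parts (Finset.univ : Finset (Fin m)),
      (-1 : ℂ) ^ (P.card - 1) * (Nat.factorial (P.card - 1) : ℂ) *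
          ∏ S ∈ P, ∏ p ∈ Finset.univ.filter
              (fun p : Fin m × Fin m => p.1 < p.2 ∧ p.1 ∈ S ∧ p.2 ∈ S), c p.1 p.2
        = ∑ F ∈ (pairsE m).powerset,
            (if F ⊆ EP P then ((-1 : ℂ) ^ (P.card - 1) * (Nat.factorial (P.card - 1) : ℂ)) *
              ∏ p ∈ F, (c p.1 p.2 - 1) else 0) := by
    intro P hP
    rw [prod_blocks c hP, prod_expand c (EP P), powerset_EP P, Finset.sum_filter,
      Finset.mul_sum]
    exact Finset.sum_congr rfl (fun F _ => by rw [mul_ite, mul_zero])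
  rw [Finset.sum_congr rfl step1, Finset.sum_comm]
  have step2 : ∀ F ∈ (pairsE m).powerset,
      ∑ P ∈ parts (Finset.univ : Finset (Fin m)),
        (if F ⊆ EP P then ((-1 : ℂ) ^ (P.card - 1) * (Nat.factorial (P.card - 1) : ℂ)) *
          ∏ p ∈ F, (c p.1 p.2 - 1) else 0)
      = (if (GF F).Connected then 1 else 0) * ∏ p ∈ F, (c p.1 p.2 - 1) := by
    intro F hF
    have hFs : F ⊆ pairsE m := Finset.mem_powerset.1 hF
    have e1 : ∀ P ∈ parts (Finset.univ : Finset (Fin m)),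
        (if F ⊆ EP P then ((-1 : ℂ) ^ (P.card - 1) * (Nat.factorial (P.card - 1) : ℂ)) *
          ∏ p ∈ F, (c p.1 p.2 - 1) else 0)
        = (if Pcond P F then ((-1 : ℂ) ^ (P.card - 1) * (Nat.factorial (P.card - 1) : ℂ))
            else 0) * ∏ p ∈ F, (c p.1 p.2 - 1) := by
      intro P _
      rw [ite_mul, zero_mul]
      exact if_congr (subset_EP_iff hFs P) rfl rfl
    rw [Finset.sum_congr rfl e1, ← Finset.sum_mul, step_B hm F]
  rw [Finset.sum_congr rfl step2]
  have step3 : ∑ F ∈ (pairsE m).powerset,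
      (if (GF F).Connected then 1 else 0) * ∏ p ∈ F, (c p.1 p.2 - 1)
      = ∑ F ∈ (pairsE m).powerset.filter (fun F => (GF F).Connected),
          ∏ p ∈ F, (c p.1 p.2 - 1) := by
    rw [Finset.sum_filter]
    exact Finset.sum_congr rfl (fun F _ => by rw [ite_mul, one_mul, zero_mul])
  rw [step3]
  refine Finset.sum_nbij' (fun F => GF F)
    (fun Ω => Finset.univ.filter (fun p : Fin m × Fin m => p.1 < p.2 ∧ Ω.Adj p.1 p.2))
    ?_ ?_ ?_ ?_ ?_
  · intro F hF
    rw [Finset.mem_filter] at hF ⊢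
    exact ⟨Finset.mem_univ _, hF.2⟩
  · intro Ω hΩ
    rw [Finset.mem_filter] at hΩ ⊢
    refine ⟨Finset.mem_powerset.2 ?_, ?_⟩
    · intro p hp
      simp only [pairsE, Finset.mem_filter, Finset.mem_univ, true_and] at hp ⊢
      exact hp.1
    · rw [GF_pairs Ω]
      exact hΩ.2
  · intro F hF
    exact pairs_GF (Finset.mem_powerset.1 (Finset.mem_filter.1 hF).1)
  · intro Ω _
    exact GF_pairs Ω
  · intro F hF
    rw [pairs_GF (Finset.mem_powerset.1 (Finset.mem_filter.1 hF).1)]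

end FinalAssembly


end Auxiliary

/-- **The identity (eq:mobius) from the paper's proof of Theorem 5.3.**

For weights `c_{ij}` (`i < j`),
`∑_{partitions {S_1,…,S_d}} (−1)^{d−1}(d−1)! ∏_ℓ ∏_{i<j ∈ S_ℓ} c_{ij}
  = ∑_{connected simple graphs Ω on {1,…,m}} ∏_{{i,j} ∈ E(Ω), i<j} (c_{ij} − 1)`. -/
theorem partition_connected_graph_expansion (m : ℕ) (hm : 1 ≤ m)
    (c : Fin m → Fin m → ℂ) :
    ∑ P ∈ Finset.univ.filter (fun P : Finset (Finset (Fin m)) => IsSetPartition P),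
        (-1 : ℂ) ^ (P.card - 1) * (Nat.factorial (P.card - 1) : ℂ) *
          ∏ S ∈ P, ∏ p ∈ Finset.univ.filter
              (fun p : Fin m × Fin m => p.1 < p.2 ∧ p.1 ∈ S ∧ p.2 ∈ S), c p.1 p.2
      = ∑ Ω ∈ Finset.univ.filter (fun Ω : SimpleGraph (Fin m) => Ω.Connected),
          ∏ p ∈ Finset.univ.filter
              (fun p : Fin m × Fin m => p.1 < p.2 ∧ Ω.Adj p.1 p.2), (c p.1 p.2 - 1) := by
  have huniv : Finset.univ.filter (fun P : Finset (Finset (Fin m)) => IsSetPartition P)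
      = parts (Finset.univ : Finset (Fin m)) := by
    apply Finset.ext; intro P
    rw [Finset.mem_filter, mem_parts]
    simp only [Finset.mem_univ, true_and, IsSetPartition]
    constructor
    · rintro ⟨h1, h2, h3⟩
      exact ⟨fun T _ => T.subset_univ, h1, h2, fun i _ => h3 i⟩
    · rintro ⟨_, h1, h2, h3⟩
      exact ⟨h1, h2, fun i => h3 i trivial⟩
  rw [huniv]
  exact partition_connected_graph_expansion' hm c
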